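/- arXiv:1804.07091 — 2 statements merged into one kernel-verified Lean document; each statement's English description precedes it below -/
import Mathlib

section
/- Let n ≥ 2, d ≥ 1, and let P be the product measure over the index set {1,…,n} × {1,…,d} of copies of the standard normal distribution N(0,1), modeling a d-variate time series (x_t)_{t=1}^n of i.i.d. standard Gaussian samples. Let I ⊆ {1,…,n} with |I| = m, 1 ≤ m ≤ n−1, and Ω = {1,…,n} \ I, and define per-coordinate empirical means μ_I = (1/m) Σ_{t ∈ I} x_t ∈ ℝ^d and μ_Ω = (1/(n−m)) Σ_{t ∈ Ω} x_t ∈ ℝ^d. Then the expectation under P of the Kullback-Leibler score ½ ‖μ_Ω − μ_I‖² equals (d/2) · (1/m + 1/(n−m)); in particular, it is inversely proportional to the interval length m in the limit n → ∞, so the KL divergence is systematically biased towards smaller intervals. -/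
open MeasureTheory ProbabilityTheory
open Real NNReal ENNReal


lemma g_exp_int : ∫ x : ℝ, rexp (-(1/2) * x^2) = √(2*π) := by
  rw [integral_gaussian]
  rw [show π / (1/2) = 2 * π by ring]

lemma g_odd_int : ∫ x : ℝ, x * rexp (-(1/2) * x^2) = 0 := by
  have h := integral_neg_eq_self (fun x : ℝ => x * rexp (-(1/2) * x^2)) (volume : Measure ℝ)
  simp only [neg_sq, neg_mul] at h
  rw [integral_neg] at h
  have e : ∀ x:ℝ, -(1/2) * x^2 = -(1/2 * x^2) := fun x => by ring
  simp only [e]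
  linarith

lemma g_sq_integrable : Integrable (fun x : ℝ => x^2 * rexp (-(1/2) * x^2)) := by
  have := integrable_rpow_mul_exp_neg_mul_sq (b := 1/2) (by norm_num) (s := 2) (by norm_num)
  have e : ∀ x : ℝ, x ^ (2:ℝ) = x ^ 2 := fun x => by
    rw [show (2:ℝ) = ((2:ℕ):ℝ) by norm_num, Real.rpow_natCast]
  simpa [e] using this

lemma g_sq_int : ∫ x : ℝ, x^2 * rexp (-(1/2) * x^2) = √(2*π) := by
  have hb : (0:ℝ) < 1/2 := by norm_num
  have hderiv : ∀ x ∈ Set.Ici (0:ℝ), HasDerivAt (fun y : ℝ => -(y * rexp (-(1/2) * y^2)))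
      (x^2 * rexp (-(1/2) * x^2) - rexp (-(1/2) * x^2)) x := by
    intro x _
    have h1 : HasDerivAt (fun y : ℝ => -(1/2) * y^2) (-(1/2) * (2 * x^1)) x :=
      (hasDerivAt_pow 2 x).const_mul (-(1/2))
    have h3 := (hasDerivAt_id x).mul h1.exp
    have h4 := h3.neg
    convert h4 using 1
    · rfl
    · rfl
    · funext y; simp [id]
    · simp [id]
      ring
  have hint_e : IntegrableOn (fun x : ℝ => rexp (-(1/2) * x^2)) (Set.Ioi 0) :=
    (integrable_exp_neg_mul_sq hb).integrableOn
  have hint_sq : IntegrableOn (fun x : ℝ => x^2 * rexp (-(1/2) * x^2)) (Set.Ioi 0) :=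
    g_sq_integrable.integrableOn
  have hten : Filter.Tendsto (fun y : ℝ => -(y * rexp (-(1/2) * y^2))) Filter.atTop (nhds (0:ℝ)) := by
    have h := rpow_mul_exp_neg_mul_sq_isLittleO_exp_neg hb 1
    have hlin : Filter.Tendsto (fun x : ℝ => -(1/2) * x) Filter.atTop Filter.atBot := by
      have h0 : Filter.Tendsto (fun x : ℝ => (1/2) * x) Filter.atTop Filter.atTop :=
        Filter.Tendsto.const_mul_atTop (by norm_num) Filter.tendsto_id
      have := Filter.tendsto_neg_atBot_iff.mpr h0
      simpa [neg_mul] using this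
    have h2 := h.tendsto_zero_of_tendsto (Real.tendsto_exp_atBot.comp hlin)
    simp only [Real.rpow_one] at h2
    simpa using h2.neg
  have h5 : ∫ x in Set.Ioi (0:ℝ), (x^2 * rexp (-(1/2)*x^2) - rexp (-(1/2)*x^2)) = 0 := by
    rw [integral_Ioi_of_hasDerivAt_of_tendsto' hderiv (hint_sq.sub hint_e) hten]
    simp
  rw [integral_sub hint_sq hint_e] at h5
  have h7 : ∫ x : ℝ, x^2 * rexp (-(1/2) * x^2) = 2 * ∫ x in Set.Ioi (0:ℝ), x^2 * rexp (-(1/2)*x^2) := by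
    rw [← integral_comp_abs (f := fun y => y^2 * rexp (-(1/2) * y^2))]
    congr 1; ext x; rw [sq_abs]
  have h8 : ∫ x : ℝ, rexp (-(1/2) * x^2) = 2 * ∫ x in Set.Ioi (0:ℝ), rexp (-(1/2)*x^2) := by
    rw [← integral_comp_abs (f := fun y => rexp (-(1/2) * y^2))]
    congr 1; ext x; rw [sq_abs]
  rw [h7]
  rw [show ∫ x in Set.Ioi (0:ℝ), x^2 * rexp (-(1/2)*x^2) = ∫ x in Set.Ioi (0:ℝ), rexp (-(1/2)*x^2) by linarith]
  rw [← h8, g_exp_int]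

lemma gpdf01 : ∀ x : ℝ, gaussianPDFReal 0 1 x = (√(2*π))⁻¹ * rexp (-(1/2) * x^2) := by
  intro x
  simp only [gaussianPDFReal, NNReal.coe_one, mul_one, sub_zero]
  ring_nf

lemma gauss01_integral (g : ℝ → ℝ) :
    ∫ x, g x ∂(gaussianReal 0 1) = ∫ x, gaussianPDFReal 0 1 x * g x := by
  rw [gaussianReal_of_var_ne_zero 0 one_ne_zero]
  have hmeas : Measurable fun x => Real.toNNReal (gaussianPDFReal 0 1 x) :=
    (measurable_gaussianPDFReal 0 1).real_toNNReal
  have hdens : gaussianPDF 0 1 = fun x => ((Real.toNNReal (gaussianPDFReal 0 1 x) : ℝ≥0) : ℝ≥0∞) := by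
    ext x; simp [gaussianPDF, ENNReal.ofReal]
  rw [hdens, integral_withDensity_eq_integral_smul hmeas g]
  congr 1; ext x
  rw [NNReal.smul_def, smul_eq_mul, Real.coe_toNNReal _ (gaussianPDFReal_nonneg 0 1 x)]

lemma gauss01_integrable (g : ℝ → ℝ)
    (hg : Integrable (fun x => gaussianPDFReal 0 1 x * g x)) :
    Integrable g (gaussianReal 0 1) := by
  rw [gaussianReal_of_var_ne_zero 0 one_ne_zero]
  have hmeas : Measurable fun x => Real.toNNReal (gaussianPDFReal 0 1 x) :=
    (measurable_gaussianPDFReal 0 1).real_toNNReal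
  have hdens : gaussianPDF 0 1 = fun x => ((Real.toNNReal (gaussianPDFReal 0 1 x) : ℝ≥0) : ℝ≥0∞) := by
    ext x; simp [gaussianPDF, ENNReal.ofReal]
  rw [hdens, integrable_withDensity_iff_integrable_smul hmeas]
  have hfx : (fun x => (gaussianPDFReal 0 1 x).toNNReal • g x) = fun x => gaussianPDFReal 0 1 x * g x := by
    ext x
    rw [NNReal.smul_def, smul_eq_mul, Real.coe_toNNReal _ (gaussianPDFReal_nonneg 0 1 x)]
  rw [hfx]; exact hg

lemma sqrt2pi_ne : (√(2*π)) ≠ 0 := by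
  positivity

lemma gauss01_moment1 : ∫ x, x ∂(gaussianReal 0 1) = 0 := by
  rw [gauss01_integral]
  simp only [gpdf01]
  have : ∀ x : ℝ, (√(2*π))⁻¹ * rexp (-(1/2) * x^2) * x
      = (√(2*π))⁻¹ * (x * rexp (-(1/2) * x^2)) := fun x => by ring
  simp only [this]
  rw [integral_const_mul, g_odd_int, mul_zero]

lemma gauss01_moment2 : ∫ x, x * x ∂(gaussianReal 0 1) = 1 := by
  rw [gauss01_integral]
  simp only [gpdf01]
  have : ∀ x : ℝ, (√(2*π))⁻¹ * rexp (-(1/2) * x^2) * (x * x)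
      = (√(2*π))⁻¹ * (x^2 * rexp (-(1/2) * x^2)) := fun x => by ring
  simp only [this]
  rw [integral_const_mul, g_sq_int, inv_mul_cancel₀ sqrt2pi_ne]

lemma gauss01_int_id : Integrable (fun x : ℝ => x) (gaussianReal 0 1) := by
  apply gauss01_integrable
  simp only [gpdf01]
  have : ∀ x : ℝ, (√(2*π))⁻¹ * rexp (-(1/2) * x^2) * x
      = (√(2*π))⁻¹ * (x * rexp (-(1/2) * x^2)) := fun x => by ring
  simp only [this]
  exact (integrable_mul_exp_neg_mul_sq (by norm_num : (0:ℝ) < 1/2)).const_mul _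

lemma gauss01_int_sq : Integrable (fun x : ℝ => x * x) (gaussianReal 0 1) := by
  apply gauss01_integrable
  simp only [gpdf01]
  have : ∀ x : ℝ, (√(2*π))⁻¹ * rexp (-(1/2) * x^2) * (x * x)
      = (√(2*π))⁻¹ * (x^2 * rexp (-(1/2) * x^2)) := fun x => by ring
  simp only [this]
  exact g_sq_integrable.const_mul _

lemma gauss01_int_const (c : ℝ) : Integrable (fun _ : ℝ => c) (gaussianReal 0 1) :=
  integrable_const c

lemma gauss01_int_one : Integrable (fun _ : ℝ => (1:ℝ)) (gaussianReal 0 1) :=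
  integrable_const 1


section Pi
variable {ι : Type*} [Fintype ι] [DecidableEq ι]

noncomputable def pairF (j k l : ι) (z : ℝ) : ℝ :=
  (if l = j then z else 1) * (if l = k then z else 1)

lemma prod_pairF (j k : ι) (x : ι → ℝ) : ∏ l, pairF j k l (x l) = x j * x k := by
  unfold pairF
  rw [Finset.prod_mul_distrib, Finset.prod_ite_eq' Finset.univ j x,
    Finset.prod_ite_eq' Finset.univ k x]
  simp

lemma integrable_pairF (j k l : ι) : Integrable (pairF j k l) (gaussianReal 0 1) := by
  unfold pairF
  by_cases hj : l = j <;> by_cases hk : l = k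
  · simp only [if_pos hj, if_pos hk]; exact gauss01_int_sq
  · simp only [if_pos hj, if_neg hk, mul_one]; exact gauss01_int_id
  · simp only [if_neg hj, if_pos hk, one_mul]; exact gauss01_int_id
  · simp only [if_neg hj, if_neg hk, mul_one]; exact integrable_const (1:ℝ)

lemma integral_pairF (j k l : ι) : ∫ z, pairF j k l z ∂(gaussianReal 0 1)
    = if l = j then (if l = k then 1 else 0) else (if l = k then 0 else 1) := by
  unfold pairF
  by_cases hj : l = j <;> by_cases hk : l = k
  · simp only [if_pos hj, if_pos hk]; exact gauss01_moment2
  · simp only [if_pos hj, if_neg hk, mul_one]; exact gauss01_moment1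
  · simp only [if_neg hj, if_pos hk, one_mul]; exact gauss01_moment1
  · simp only [if_neg hj, if_neg hk, mul_one]; simp

lemma pi_moment (j k : ι) :
    ∫ x : ι → ℝ, x j * x k ∂(Measure.pi fun _ : ι => gaussianReal 0 1)
      = if j = k then 1 else 0 := by
  letI : MeasureSpace ℝ := MeasureSpace.mk (gaussianReal 0 1)
  haveI : SigmaFinite (volume : Measure ℝ) := by
    show SigmaFinite (gaussianReal 0 1); infer_instance
  have hvol : (Measure.pi fun _ : ι => gaussianReal 0 1) = (volume : Measure (ι → ℝ)) := rfl
  rw [hvol]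
  have hfun : (fun x : ι → ℝ => x j * x k) = fun x => ∏ l, pairF j k l (x l) := by
    funext x; rw [prod_pairF]
  rw [hfun, MeasureTheory.integral_fintype_prod_volume_eq_prod (pairF j k)]
  have hint : ∀ l : ι, (∫ z, pairF j k l z : ℝ)
      = if l = j then (if l = k then 1 else 0) else (if l = k then 0 else 1) :=
    fun l => integral_pairF j k l
  rw [Finset.prod_congr rfl fun l _ => hint l]
  by_cases hjk : j = k
  · subst hjk
    rw [if_pos rfl]
    refine Finset.prod_eq_one fun l _ => ?_
    by_cases h : l = j <;> simp [h]
  · rw [if_neg hjk]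
    exact Finset.prod_eq_zero (Finset.mem_univ j) (by rw [if_pos rfl, if_neg hjk])

lemma pi_integrable (j k : ι) :
    Integrable (fun x : ι → ℝ => x j * x k) (Measure.pi fun _ : ι => gaussianReal 0 1) := by
  letI : MeasureSpace ℝ := MeasureSpace.mk (gaussianReal 0 1)
  haveI : SigmaFinite (volume : Measure ℝ) := by
    show SigmaFinite (gaussianReal 0 1); infer_instance
  have hvol : (Measure.pi fun _ : ι => gaussianReal 0 1) = (volume : Measure (ι → ℝ)) := rfl
  rw [hvol]
  have hfun : (fun x : ι → ℝ => x j * x k) = fun x => ∏ l, pairF j k l (x l) := by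
    funext x; rw [prod_pairF]
  rw [hfun]
  exact Integrable.fintype_prod fun l => integrable_pairF j k l

end Pi

/-- For a `d`-variate time series of `n` i.i.d. standard normal samples, the
expected Kullback-Leibler score `½‖μ_Ω − μ_I‖²` of an interval `I` of length `m`
(with complement `Ω`) equals `(d/2)·(1/m + 1/(n−m))`: the KL divergence is
systematically biased towards smaller intervals. -/
theorem kl_score_expectation (n d : ℕ) (hn : 2 ≤ n) (hd : 1 ≤ d)
    (I : Finset (Fin n)) (m : ℕ) (hm : 1 ≤ m) (hmn : m ≤ n - 1) (hI : I.card = m) :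
    (∫ x : Fin n × Fin d → ℝ,
        (1 / 2) * ∑ i : Fin d,
          ((1 / ((n - m : ℕ) : ℝ)) * ∑ t ∈ Iᶜ, x (t, i)
            - (1 / (m : ℝ)) * ∑ t ∈ I, x (t, i)) ^ 2
      ∂(Measure.pi (fun _ : Fin n × Fin d => gaussianReal 0 1)))
    = ((d : ℝ) / 2) * (1 / (m : ℝ) + 1 / ((n - m : ℕ) : ℝ)) := by
  classical
  have hm0 : (m : ℝ) ≠ 0 := Nat.cast_ne_zero.mpr (by omega)
  have hnm0 : ((n - m : ℕ) : ℝ) ≠ 0 := Nat.cast_ne_zero.mpr (by omega)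
  set P := Measure.pi (fun _ : Fin n × Fin d => gaussianReal 0 1) with hP
  set w : Fin n → ℝ := fun t => if t ∈ I then -(1 / (m : ℝ)) else 1 / ((n - m : ℕ) : ℝ) with hw
  have hsum : ∀ (x : Fin n × Fin d → ℝ) (i : Fin d),
      (1 / ((n - m : ℕ) : ℝ)) * ∑ t ∈ Iᶜ, x (t, i)
        - (1 / (m : ℝ)) * ∑ t ∈ I, x (t, i)
      = ∑ t : Fin n, w t * x (t, i) := by
    intro x i
    have e1 : ∑ t ∈ I, w t * x (t, i) = -(1 / (m : ℝ)) * ∑ t ∈ I, x (t, i) := by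
      rw [Finset.mul_sum]
      exact Finset.sum_congr rfl fun t ht => by rw [hw]; simp only [if_pos ht]; try ring
    have e2 : ∑ t ∈ Iᶜ, w t * x (t, i) = (1 / ((n - m : ℕ) : ℝ)) * ∑ t ∈ Iᶜ, x (t, i) := by
      rw [Finset.mul_sum]
      exact Finset.sum_congr rfl fun t ht => by
        rw [hw]; simp only [if_neg (Finset.mem_compl.mp ht)]
    rw [← Finset.sum_add_sum_compl I (fun t => w t * x (t, i)), e1, e2]
    ring
  have hrw : ∀ x : Fin n × Fin d → ℝ,
      (1 / 2) * ∑ i : Fin d,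
          ((1 / ((n - m : ℕ) : ℝ)) * ∑ t ∈ Iᶜ, x (t, i)
            - (1 / (m : ℝ)) * ∑ t ∈ I, x (t, i)) ^ 2
      = ∑ i : Fin d, ∑ t : Fin n, ∑ s : Fin n,
          ((1 / 2) * (w t * w s)) * (x (t, i) * x (s, i)) := by
    intro x
    rw [Finset.mul_sum]
    refine Finset.sum_congr rfl fun i _ => ?_
    rw [hsum x i, sq, Finset.sum_mul_sum, Finset.mul_sum]
    refine Finset.sum_congr rfl fun t _ => ?_
    rw [Finset.mul_sum]
    exact Finset.sum_congr rfl fun s _ => by ring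
  simp only [hrw]
  rw [integral_finset_sum _ fun i _ =>
    integrable_finset_sum _ fun t _ => integrable_finset_sum _ fun s _ =>
      (pi_integrable (t, i) (s, i)).const_mul _]
  have hinner : ∀ i : Fin d,
      (∫ x : Fin n × Fin d → ℝ, ∑ t : Fin n, ∑ s : Fin n,
          ((1 / 2) * (w t * w s)) * (x (t, i) * x (s, i)) ∂P)
      = (1 / 2) * ∑ t : Fin n, w t * w t := by
    intro i
    rw [integral_finset_sum _ fun t _ => integrable_finset_sum _ fun s _ =>
      (pi_integrable (t, i) (s, i)).const_mul _]
    have : ∀ t : Fin n,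
        (∫ x : Fin n × Fin d → ℝ, ∑ s : Fin n,
            ((1 / 2) * (w t * w s)) * (x (t, i) * x (s, i)) ∂P)
        = (1 / 2) * (w t * w t) := by
      intro t
      rw [integral_finset_sum _ fun s _ => (pi_integrable (t, i) (s, i)).const_mul _]
      have h1 : ∀ s : Fin n,
          (∫ x : Fin n × Fin d → ℝ, ((1 / 2) * (w t * w s)) * (x (t, i) * x (s, i)) ∂P)
          = ((1 / 2) * (w t * w s)) * (if t = s then 1 else 0) := by
        intro s
        rw [integral_const_mul, pi_moment (t, i) (s, i)]
        congr 1
        simp [Prod.ext_iff]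
      rw [Finset.sum_congr rfl fun s _ => h1 s]
      simp [mul_ite, Finset.sum_ite_eq]
    rw [Finset.sum_congr rfl fun t _ => this t, ← Finset.mul_sum]
  rw [Finset.sum_congr rfl fun i _ => hinner i]
  rw [Finset.sum_const, Finset.card_univ, Fintype.card_fin]
  have hwsum : ∑ t : Fin n, w t * w t
      = (m : ℝ) * (1 / (m : ℝ))^2 + ((n - m : ℕ) : ℝ) * (1 / ((n - m : ℕ) : ℝ))^2 := by
    rw [← Finset.sum_add_sum_compl I (fun t => w t * w t)]
    have e1 : ∑ t ∈ I, w t * w t = (m : ℝ) * (1 / (m : ℝ))^2 := by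
      rw [Finset.sum_congr rfl fun t ht => show w t * w t = (1 / (m : ℝ))^2 by
        rw [hw]; simp only [if_pos ht]; try ring]
      rw [Finset.sum_const, hI, nsmul_eq_mul]
    have e2 : ∑ t ∈ Iᶜ, w t * w t = ((n - m : ℕ) : ℝ) * (1 / ((n - m : ℕ) : ℝ))^2 := by
      rw [Finset.sum_congr rfl fun t ht => show w t * w t = (1 / ((n - m : ℕ) : ℝ))^2 by
        rw [hw]; simp only [if_neg (Finset.mem_compl.mp ht)]; try ring]
      rw [Finset.sum_const, Finset.card_compl, hI, Fintype.card_fin, nsmul_eq_mul]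
    rw [e1, e2]
  rw [hwsum, nsmul_eq_mul]
  field_simp
end

section
/- Let n ≥ 2, d ≥ 1, and let P be the product measure over the index set {1,…,n} × {1,…,d} of copies of the standard normal distribution N(0,1), modeling a d-variate time series (x_t)_{t=1}^n of i.i.d. standard Gaussian samples. Let I ⊆ {1,…,n} with |I| = m, 1 ≤ m ≤ n−1, and Ω = {1,…,n} \ I, with per-coordinate empirical means μ_I = (1/m) Σ_{t ∈ I} x_t and μ_Ω = (1/(n−m)) Σ_{t ∈ Ω} x_t. Then the expectation under P of the unbiased Kullback-Leibler score 2m · ½ ‖μ_Ω − μ_I‖² equals d · n / (n − m); in particular, for fixed n and d this expectation depends on m only through the factor n/(n−m), which converges to d independently of m as n → ∞. -/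
open MeasureTheory ProbabilityTheory Real
open scoped NNReal ENNReal

namespace UKL



variable {E : Type*} [MeasurableSpace E]

theorem integrable_fin_prod (μ : Measure E) [SigmaFinite μ] {n : ℕ} {f : Fin n → E → ℝ}
    (hf : ∀ i, Integrable (f i) μ) :
    Integrable (fun x : Fin n → E => ∏ i, f i (x i)) (Measure.pi fun _ => μ) := by
  induction n with
  | zero =>
    simp only [Finset.univ_eq_empty, Finset.prod_empty]
    apply integrable_const_iff.2
    right
    exact ⟨by simp [Measure.pi_empty_univ]⟩
  | succ n n_ih =>
    have := ((measurePreserving_piFinSuccAbove (fun _ : Fin (n + 1) => μ) 0).symm)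
    rw [← this.integrable_comp_emb (MeasurableEquiv.measurableEmbedding _)]
    simp_rw [MeasurableEquiv.piFinSuccAbove_symm_apply, Fin.insertNthEquiv,
      Fin.prod_univ_succ, Fin.insertNth_zero]
    simp only [Fin.zero_succAbove, Function.comp_def, Fin.cons_zero, Fin.cons_succ,
      Equiv.coe_fn_mk]
    have : Integrable (fun x : Fin n → E => ∏ j, f (Fin.succ j) (x j)) (Measure.pi fun _ => μ) :=
      n_ih (fun i => hf _)
    exact Integrable.mul_prod (hf 0) this

theorem integral_fin_prod (μ : Measure E) [SigmaFinite μ] {n : ℕ} (f : Fin n → E → ℝ) :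
    (∫ x : Fin n → E, ∏ i, f i (x i) ∂(Measure.pi fun _ => μ)) = ∏ i, ∫ x, f i x ∂μ := by
  induction n with
  | zero => simp [Measure.real, Measure.pi_empty_univ]
  | succ n n_ih =>
    calc
      _ = ∫ x : E × (Fin n → E),
          f 0 x.1 * ∏ i : Fin n, f (Fin.succ i) (x.2 i)
          ∂((μ).prod (Measure.pi fun _ : Fin n => μ)) := by
        rw [← ((measurePreserving_piFinSuccAbove (fun _ : Fin (n + 1) => μ) 0).symm).integral_comp']
        simp only [MeasurableEquiv.piFinSuccAbove_symm_apply, Fin.insertNthEquiv,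
          Fin.prod_univ_succ, Fin.insertNth_zero, Equiv.coe_fn_mk, Fin.cons_succ,
          Fin.zero_succAbove, Fin.cons_zero, cast_eq]
      _ = (∫ x, f 0 x ∂μ) * ∏ i : Fin n, ∫ x, f (Fin.succ i) x ∂μ := by
        rw [← n_ih, ← integral_prod_mul]
      _ = ∏ i, ∫ x, f i x ∂μ := by rw [Fin.prod_univ_succ]

theorem integrable_fintype_prod (μ : Measure E) [SigmaFinite μ] {ι : Type*} [Fintype ι]
    {f : ι → E → ℝ} (hf : ∀ i, Integrable (f i) μ) :
    Integrable (fun x : ι → E => ∏ i, f i (x i)) (Measure.pi fun _ => μ) := by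
  let e := (Fintype.equivFin ι).symm
  rw [← (measurePreserving_piCongrLeft (fun _ : ι => μ) e).integrable_comp_emb
    (MeasurableEquiv.measurableEmbedding _)]
  simp_rw [← e.prod_comp, MeasurableEquiv.coe_piCongrLeft, Function.comp_def,
    Equiv.piCongrLeft_apply_apply]
  exact integrable_fin_prod μ (fun i => hf _)

theorem integral_fintype_prod (μ : Measure E) [SigmaFinite μ] {ι : Type*} [Fintype ι]
    (f : ι → E → ℝ) :
    (∫ x : ι → E, ∏ i, f i (x i) ∂(Measure.pi fun _ => μ)) = ∏ i, ∫ x, f i x ∂μ := by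
  let e := (Fintype.equivFin ι).symm
  rw [← (measurePreserving_piCongrLeft (fun _ : ι => μ) e).integral_comp']
  simp_rw [← e.prod_comp, MeasurableEquiv.coe_piCongrLeft,
    Equiv.piCongrLeft_apply_apply]
  exact integral_fin_prod μ _





lemma gaussianPDFReal_zero_one (x : ℝ) :
    gaussianPDFReal 0 1 x = (√(2 * π))⁻¹ * rexp (-(1/2) * x ^ 2) := by
  simp only [gaussianPDFReal, NNReal.coe_one, mul_one, sub_zero]
  ring_nf

lemma integral_gaussianReal_fun (g : ℝ → ℝ) :
    ∫ x, g x ∂(gaussianReal 0 1) = ∫ x, gaussianPDFReal 0 1 x * g x := by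
  rw [gaussianReal_of_var_ne_zero 0 one_ne_zero]
  have h : (gaussianPDF 0 1) = fun x => (((gaussianPDFReal 0 1 x).toNNReal : ℝ≥0) : ℝ≥0∞) := by
    funext x
    simp [gaussianPDF, ENNReal.ofReal]
  rw [h, integral_withDensity_eq_integral_smul
    ((measurable_gaussianPDFReal 0 1).real_toNNReal) g]
  congr 1
  funext x
  simp [NNReal.smul_def, Real.coe_toNNReal _ (gaussianPDFReal_nonneg 0 1 x)]

lemma integrable_gaussianReal_iff (g : ℝ → ℝ) :
    Integrable g (gaussianReal 0 1) ↔ Integrable (fun x => gaussianPDFReal 0 1 x * g x) := by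
  rw [gaussianReal_of_var_ne_zero 0 one_ne_zero]
  have h : (gaussianPDF 0 1) = fun x => (((gaussianPDFReal 0 1 x).toNNReal : ℝ≥0) : ℝ≥0∞) := by
    funext x
    simp [gaussianPDF, ENNReal.ofReal]
  rw [h, integrable_withDensity_iff_integrable_smul
    ((measurable_gaussianPDFReal 0 1).real_toNNReal)]
  constructor <;> intro hh <;> apply hh.congr <;> filter_upwards with x <;>
    simp [NNReal.smul_def, Real.coe_toNNReal _ (gaussianPDFReal_nonneg 0 1 x)]

lemma integrable_exp_half : Integrable (fun x : ℝ => rexp (-(1/2) * x ^ 2)) :=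
  integrable_exp_neg_mul_sq (by norm_num)

lemma integrable_mul_exp_half : Integrable (fun x : ℝ => x * rexp (-(1/2) * x ^ 2)) :=
  integrable_mul_exp_neg_mul_sq (by norm_num)

lemma integrable_sq_exp_half : Integrable (fun x : ℝ => x ^ 2 * rexp (-(1/2) * x ^ 2)) := by
  have h := integrable_rpow_mul_exp_neg_mul_sq (b := (1/2:ℝ)) (by norm_num) (s := 2) (by norm_num)
  have e : ∀ x : ℝ, x ^ (2:ℝ) = x ^ (2:ℕ) := by
    intro x
    rw [show (2:ℝ) = ((2:ℕ):ℝ) by norm_num, Real.rpow_natCast]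
  simpa [e] using h

lemma integral_id_mul_exp : ∫ x : ℝ, x * rexp (-(1/2) * x ^ 2) = 0 := by
  apply integral_eq_zero_of_hasDerivAt_of_integrable
    (f := fun y : ℝ => -rexp (-(1/2) * y ^ 2))
  · intro x
    have h := (((hasDerivAt_pow 2 x).const_mul (-(1/2):ℝ)).exp).neg
    convert h using 1
    · funext y; simp
    simp
    ring
  · exact integrable_mul_exp_half
  · exact integrable_exp_half.neg

lemma integral_exp_half : ∫ x : ℝ, rexp (-(1/2) * x ^ 2) = √(2 * π) := by
  have := integral_gaussian (1/2)
  rw [show π / (1/2 : ℝ) = 2 * π by ring] at this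
  simpa using this

lemma integral_sq_mul_exp : ∫ x : ℝ, x ^ 2 * rexp (-(1/2) * x ^ 2) = √(2 * π) := by
  have key : ∫ x : ℝ, (x ^ 2 * rexp (-(1/2) * x ^ 2) - rexp (-(1/2) * x ^ 2)) = 0 := by
    apply integral_eq_zero_of_hasDerivAt_of_integrable
      (f := fun y : ℝ => -y * rexp (-(1/2) * y ^ 2))
    · intro x
      have hexp := ((hasDerivAt_pow 2 x).const_mul (-(1/2):ℝ)).exp
      have h := ((hasDerivAt_id x).neg).mul hexp
      convert h using 1
      · rfl
      · rfl
      simp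
      ring
    · exact integrable_sq_exp_half.sub integrable_exp_half
    · have : (fun x : ℝ => -x * rexp (-(1/2) * x ^ 2))
          = fun x : ℝ => -(x * rexp (-(1/2) * x ^ 2)) := by funext x; ring
      rw [this]
      exact integrable_mul_exp_half.neg
  have h2 := integral_sub integrable_sq_exp_half integrable_exp_half
  rw [key] at h2
  have h3 := integral_exp_half
  linarith [h2.symm, h3]

lemma sqrt_two_pi_pos : (0:ℝ) < √(2 * π) := Real.sqrt_pos.2 (by positivity)

lemma integral_id_gaussian : ∫ x, x ∂(gaussianReal 0 1) = 0 := by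
  rw [integral_gaussianReal_fun]
  have h : (fun x : ℝ => gaussianPDFReal 0 1 x * x)
      = fun x : ℝ => (√(2 * π))⁻¹ * (x * rexp (-(1/2) * x ^ 2)) := by
    funext x; rw [gaussianPDFReal_zero_one]; ring
  rw [h, integral_const_mul, integral_id_mul_exp, mul_zero]

lemma integral_sq_gaussian : ∫ x, x ^ 2 ∂(gaussianReal 0 1) = 1 := by
  rw [integral_gaussianReal_fun]
  have h : (fun x : ℝ => gaussianPDFReal 0 1 x * x ^ 2)
      = fun x : ℝ => (√(2 * π))⁻¹ * (x ^ 2 * rexp (-(1/2) * x ^ 2)) := by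
    funext x; rw [gaussianPDFReal_zero_one]; ring
  rw [h, integral_const_mul, integral_sq_mul_exp, inv_mul_cancel₀ sqrt_two_pi_pos.ne']

lemma integrable_id_gaussian : Integrable (fun x : ℝ => x) (gaussianReal 0 1) := by
  rw [integrable_gaussianReal_iff]
  have h : (fun x : ℝ => gaussianPDFReal 0 1 x * x)
      = fun x : ℝ => (√(2 * π))⁻¹ * (x * rexp (-(1/2) * x ^ 2)) := by
    funext x; rw [gaussianPDFReal_zero_one]; ring
  rw [h]
  exact integrable_mul_exp_half.const_mul _

lemma integrable_sq_gaussian : Integrable (fun x : ℝ => x ^ 2) (gaussianReal 0 1) := by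
  rw [integrable_gaussianReal_iff]
  have h : (fun x : ℝ => gaussianPDFReal 0 1 x * x ^ 2)
      = fun x : ℝ => (√(2 * π))⁻¹ * (x ^ 2 * rexp (-(1/2) * x ^ 2)) := by
    funext x; rw [gaussianPDFReal_zero_one]; ring
  rw [h]
  exact integrable_sq_exp_half.const_mul _





variable {ι : Type*} [Fintype ι] [DecidableEq ι]

lemma coord_mul_eq_prod (a b : ι) (x : ι → ℝ) :
    x a * x b = ∏ c, ((if c = a then x c else 1) * (if c = b then x c else 1)) := by
  rw [Finset.prod_mul_distrib, Finset.prod_ite_eq', Finset.prod_ite_eq']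
  simp

lemma integrable_coord_mul (a b : ι) :
    Integrable (fun x : ι → ℝ => x a * x b) (Measure.pi fun _ => gaussianReal 0 1) := by
  have h : (fun x : ι → ℝ => x a * x b)
      = fun x : ι → ℝ =>
        ∏ c, (fun (c : ι) (y : ℝ) => (if c = a then y else 1) * (if c = b then y else 1)) c (x c) := by
    funext x
    exact coord_mul_eq_prod a b x
  rw [h]
  refine integrable_fintype_prod (gaussianReal 0 1)
    (f := fun (c : ι) (y : ℝ) => (if c = a then y else 1) * (if c = b then y else 1)) ?_
  intro c
  by_cases ha : c = a
  · subst ha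
    by_cases hb : c = b
    · subst hb
      simp only [if_pos rfl]
      simpa [pow_two] using integrable_sq_gaussian
    · simp only [if_pos rfl, if_neg hb, mul_one]
      exact integrable_id_gaussian
  · by_cases hb : c = b
    · subst hb
      simp only [if_neg ha, if_pos rfl, one_mul]
      exact integrable_id_gaussian
    · simp only [if_neg ha, if_neg hb, mul_one]
      exact integrable_const 1

lemma integral_coord_mul (a b : ι) :
    (∫ x : ι → ℝ, x a * x b ∂(Measure.pi fun _ => gaussianReal 0 1))
      = if a = b then 1 else 0 := by
  have h : (fun x : ι → ℝ => x a * x b)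
      = fun x : ι → ℝ =>
        ∏ c, (fun (c : ι) (y : ℝ) => (if c = a then y else 1) * (if c = b then y else 1)) c (x c) := by
    funext x
    exact coord_mul_eq_prod a b x
  rw [h, integral_fintype_prod (gaussianReal 0 1)
    (f := fun (c : ι) (y : ℝ) => (if c = a then y else 1) * (if c = b then y else 1))]
  have hf : ∀ c : ι, (∫ y : ℝ, (if c = a then y else 1) * (if c = b then y else 1)
        ∂(gaussianReal 0 1))
      = if c = a then (if c = b then 1 else 0) else if c = b then 0 else 1 := by
    intro c
    by_cases ha : c = a
    · subst ha
      by_cases hb : c = b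
      · subst hb
        simp only [if_pos rfl]
        simpa [pow_two] using integral_sq_gaussian
      · simp only [if_pos rfl, if_neg hb, mul_one]
        exact integral_id_gaussian
    · by_cases hb : c = b
      · subst hb
        simp only [if_neg ha, if_pos rfl, one_mul]
        exact integral_id_gaussian
      · simp only [if_neg ha, if_neg hb, mul_one]
        simp
  simp only [hf]
  by_cases hab : a = b
  · subst hab
    rw [if_pos rfl]
    apply Finset.prod_eq_one
    intro c _
    by_cases hc : c = a <;> simp [hc]
  · rw [if_neg hab]
    apply Finset.prod_eq_zero (Finset.mem_univ a)
    simp [hab]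


end UKL

/-- For a `d`-variate time series of `n` i.i.d. standard normal samples, the
expected *unbiased* Kullback-Leibler score `2m · ½‖μ_Ω − μ_I‖²` of an interval `I`
of length `m` (with complement `Ω`) equals `d·n/(n−m)`, which depends on `m` only
through the factor `n/(n−m)` and converges to `d` as `n → ∞`. -/
theorem unbiased_kl_score_expectation (n d : ℕ) (hn : 2 ≤ n) (hd : 1 ≤ d)
    (I : Finset (Fin n)) (m : ℕ) (hm : 1 ≤ m) (hmn : m ≤ n - 1) (hI : I.card = m) :
    (∫ x : Fin n × Fin d → ℝ,
        2 * (m : ℝ) * ((1 / 2) * ∑ i : Fin d,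
          ((1 / ((n - m : ℕ) : ℝ)) * ∑ t ∈ Iᶜ, x (t, i)
            - (1 / (m : ℝ)) * ∑ t ∈ I, x (t, i)) ^ 2)
      ∂(Measure.pi (fun _ : Fin n × Fin d => gaussianReal 0 1)))
    = (d : ℝ) * n / ((n - m : ℕ) : ℝ) := by
  have hmn' : m ≤ n := hmn.trans (Nat.sub_le n 1)
  have hK : ((n - m : ℕ) : ℝ) = (n : ℝ) - (m : ℝ) := by
    rw [Nat.cast_sub hmn']
  have hMpos : (0 : ℝ) < (m : ℝ) := by exact_mod_cast hm
  have hKpos : (0 : ℝ) < ((n - m : ℕ) : ℝ) := by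
    have h1 : 1 ≤ n - m := by omega
    exact_mod_cast h1
  set K : ℝ := ((n - m : ℕ) : ℝ) with hKdef
  set c : Fin n → ℝ := fun t => if t ∈ I then -(1 / (m : ℝ)) else 1 / K with hc
  have hA : ∀ (x : Fin n × Fin d → ℝ) (i : Fin d),
      (1 / K) * ∑ t ∈ Iᶜ, x (t, i) - (1 / (m : ℝ)) * ∑ t ∈ I, x (t, i)
        = ∑ t : Fin n, c t * x (t, i) := by
    intro x i
    rw [← Finset.sum_add_sum_compl I (fun t => c t * x (t, i))]
    have h1 : ∑ t ∈ I, c t * x (t, i) = ∑ t ∈ I, (-(1 / (m : ℝ))) * x (t, i) :=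
      Finset.sum_congr rfl (fun t ht => by simp only [hc, if_pos ht])
    have h2 : ∑ t ∈ Iᶜ, c t * x (t, i) = ∑ t ∈ Iᶜ, (1 / K) * x (t, i) :=
      Finset.sum_congr rfl (fun t ht => by
        simp only [hc, if_neg (Finset.mem_compl.mp ht)])
    rw [h1, h2, ← Finset.mul_sum, ← Finset.mul_sum]
    ring
  have hpt : ∀ x : Fin n × Fin d → ℝ,
      2 * (m : ℝ) * ((1 / 2) * ∑ i : Fin d,
          ((1 / K) * ∑ t ∈ Iᶜ, x (t, i) - (1 / (m : ℝ)) * ∑ t ∈ I, x (t, i)) ^ 2)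
        = ∑ p : Fin d × Fin n × Fin n,
            ((m : ℝ) * c p.2.1 * c p.2.2) * (x (p.2.1, p.1) * x (p.2.2, p.1)) := by
    intro x
    calc 2 * (m : ℝ) * ((1 / 2) * ∑ i : Fin d,
          ((1 / K) * ∑ t ∈ Iᶜ, x (t, i) - (1 / (m : ℝ)) * ∑ t ∈ I, x (t, i)) ^ 2)
        = ∑ i : Fin d, (m : ℝ) * (∑ t : Fin n, c t * x (t, i)) ^ 2 := by
          simp only [hA]
          rw [Finset.mul_sum, Finset.mul_sum]
          apply Finset.sum_congr rfl
          intro i _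
          ring
      _ = ∑ p : Fin d × Fin n × Fin n,
            ((m : ℝ) * c p.2.1 * c p.2.2) * (x (p.2.1, p.1) * x (p.2.2, p.1)) := by
          rw [Fintype.sum_prod_type]
          apply Finset.sum_congr rfl
          intro i _
          rw [Fintype.sum_prod_type, pow_two, Finset.sum_mul_sum, Finset.mul_sum]
          apply Finset.sum_congr rfl
          intro t _
          rw [Finset.mul_sum]
          apply Finset.sum_congr rfl
          intro s _
          ring
  simp only [hpt]
  rw [integral_finset_sum Finset.univ (fun p _ =>
    (UKL.integrable_coord_mul (p.2.1, p.1) (p.2.2, p.1)).const_mul _)]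
  simp only [integral_const_mul, UKL.integral_coord_mul, Prod.mk.injEq, and_true]
  rw [Fintype.sum_prod_type]
  have hrowsum : (∑ t : Fin n, (m : ℝ) * c t * c t) = (n : ℝ) / K := by
    rw [← Finset.sum_add_sum_compl I (fun t => (m : ℝ) * c t * c t)]
    have h1 : ∑ t ∈ I, (m : ℝ) * c t * c t
        = ∑ t ∈ I, (m : ℝ) * (-(1 / (m : ℝ))) * (-(1 / (m : ℝ))) :=
      Finset.sum_congr rfl (fun t ht => by simp only [hc, if_pos ht])
    have h2 : ∑ t ∈ Iᶜ, (m : ℝ) * c t * c t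
        = ∑ t ∈ Iᶜ, (m : ℝ) * (1 / K) * (1 / K) :=
      Finset.sum_congr rfl (fun t ht => by
        simp only [hc, if_neg (Finset.mem_compl.mp ht)])
    rw [h1, h2, Finset.sum_const, Finset.sum_const, hI, Finset.card_compl,
      Fintype.card_fin, hI, nsmul_eq_mul, nsmul_eq_mul]
    rw [show (((n - m : ℕ) : ℝ)) = K from rfl]
    field_simp
    rw [hK]
    ring
  have hinner : ∀ i : Fin d,
      (∑ t : Fin n, ∑ s : Fin n,
          ((m : ℝ) * c t * c s) * (if t = s then (1 : ℝ) else 0)) = (n : ℝ) / K := by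
    intro i
    rw [← hrowsum]
    apply Finset.sum_congr rfl
    intro t _
    simp only [mul_ite, mul_one, mul_zero, Finset.sum_ite_eq, Finset.mem_univ, if_true]
  calc ∑ i : Fin d, ∑ q : Fin n × Fin n,
        ((m : ℝ) * c q.1 * c q.2) * (if q.1 = q.2 then (1 : ℝ) else 0)
      = ∑ i : Fin d, (n : ℝ) / K := by
        apply Finset.sum_congr rfl
        intro i _
        rw [Fintype.sum_prod_type]
        exact hinner i
    _ = (d : ℝ) * n / K := by
        rw [Finset.sum_const, Finset.card_univ, Fintype.card_fin, nsmul_eq_mul]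
        ring
end
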